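/- Let H = (h_{ij})_{i,j∈[n]} be a symmetric partial matrix whose defined off-diagonal entries lie in ℝ₊ ∪ {+∞} and satisfy h_{ij} ≥ min{h_{jk}, h_{ik}} whenever all three entries are defined. If for every α ∈ ℝ₊ ∪ {+∞} each connected component of the graph G̃_H^α := (V_H^α, E_H^α ∪ S_H^α) is a complete graph, then H is M♮-convex completable; moreover, one such completion assigns to each undefined entry h_{ij} the largest value α among the defined entry values for which {i,j} ∈ S_H^α, and the smallest defined entry value to all remaining undefined entries. -/

import Mathlib

open Finset

/-- M♮-convexity for functions on `{0,1}^n` (identified with finite subsets of the index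
set) with values in `ℝ ∪ {+∞}`. -/
def MnatConvex {ι : Type*} [DecidableEq ι] (f : Finset ι → WithTop ℝ) : Prop :=
  ∀ X Y : Finset ι, ∀ i ∈ X \ Y,
    (f (X.erase i) + f (insert i Y) ≤ f X + f Y) ∨
    (∃ j ∈ Y \ X, f (insert j (X.erase i)) + f ((insert i Y).erase j) ≤ f X + f Y)

/-- The quadratic function `x ↦ Σ_i h_i x_i + Σ_{i<j} h_{ij} x_i x_j` on `{0,1}^n`. -/
def quadF {n : ℕ} (h : Fin n → ℝ) (H : Fin n → Fin n → WithTop ℝ)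
    (S : Finset (Fin n)) : WithTop ℝ :=
  (∑ i ∈ S, (h i : WithTop ℝ)) + ∑ p ∈ (S ×ˢ S).filter (fun p => p.1 < p.2), H p.1 p.2

/-- `{i,j} ∈ E_H^α`: the entry `h_{ij}` is defined and `h_{ij} ≥ α`. -/
def AdjE {n : ℕ} (H : Fin n → Fin n → Option (WithTop ℝ)) (α : WithTop ℝ)
    (i j : Fin n) : Prop :=
  i ≠ j ∧ ∃ c : WithTop ℝ, H i j = some c ∧ α ≤ c

/-- `i ∈ V_H^α`: the vertex `i` is incident to some edge of `E_H^α`. -/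
def InV {n : ℕ} (H : Fin n → Fin n → Option (WithTop ℝ)) (α : WithTop ℝ)
    (i : Fin n) : Prop :=
  ∃ j : Fin n, AdjE H α i j

/-- `{i,j} ∈ S_H^α`: `{i,j} ∉ E_H` (the entry is undefined), `i, j ∈ V_H^α`, and `i, j` are
connected by a path in the graph `(V_H^α, E_H^α)`. -/
def AdjS {n : ℕ} (H : Fin n → Fin n → Option (WithTop ℝ)) (α : WithTop ℝ)
    (i j : Fin n) : Prop :=
  i ≠ j ∧ H i j = none ∧ InV H α i ∧ InV H α j ∧ Relation.ReflTransGen (AdjE H α) i j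

/-- Adjacency in the graph `G̃_H^α = (V_H^α, E_H^α ∪ S_H^α)`. -/
def AdjT {n : ℕ} (H : Fin n → Fin n → Option (WithTop ℝ)) (α : WithTop ℝ)
    (i j : Fin n) : Prop :=
  AdjE H α i j ∨ AdjS H α i j

/-- `β` is one of the values of the defined entries of `H`. -/
def DefVal {n : ℕ} (H : Fin n → Fin n → Option (WithTop ℝ)) (β : WithTop ℝ) : Prop :=
  ∃ i j : Fin n, i ≠ j ∧ H i j = some β

noncomputable def wgap (m a : WithTop ℝ) : WithTop ℝ :=
  if a = ⊤ then ⊤ else ((a.untopD 0 - m.untopD 0 : ℝ) : WithTop ℝ)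

lemma wgap_nonneg {m a : WithTop ℝ} (hm : m ≠ ⊤) (h : m ≤ a) : 0 ≤ wgap m a := by
  unfold wgap
  split_ifs with h1
  · exact le_top
  · lift a to ℝ using h1
    lift m to ℝ using hm
    have : (m : ℝ) ≤ a := by exact_mod_cast h
    simp only [WithTop.untopD_coe]
    exact_mod_cast sub_nonneg.mpr this

lemma wgap_add {m a : WithTop ℝ} (hm : m ≠ ⊤) (h : m ≤ a) : m + wgap m a = a := by
  unfold wgap
  split_ifs with h1
  · simp [h1]
  · lift a to ℝ using h1
    lift m to ℝ using hm
    simp only [WithTop.untopD_coe]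
    rw [← WithTop.coe_add]
    norm_num

lemma exists_coeff (L : Finset (WithTop ℝ)) :
    (∀ x ∈ L, (0:WithTop ℝ) ≤ x) →
    ∃ c : WithTop ℝ → WithTop ℝ, (∀ α, 0 ≤ c α) ∧
      ∀ q ∈ L, ∑ α ∈ L.filter (fun α => α ≤ q), c α = q := by
  classical
  induction L using Finset.induction_on_max with
  | empty => exact fun _ => ⟨fun _ => 0, fun _ => le_refl _, fun q hq => absurd hq (by simp)⟩
  | insert a s hs ih =>
    intro hnn
    have hnns : ∀ x ∈ s, (0:WithTop ℝ) ≤ x := fun x hx => hnn x (mem_insert_of_mem hx)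
    have has : a ∉ s := fun h => lt_irrefl a (hs a h)
    obtain ⟨c', hc'0, hc'⟩ := ih hnns
    by_cases hse : s.Nonempty
    · set m := s.max' hse with hm
      have hms : m ∈ s := s.max'_mem hse
      have hma : m < a := hs m hms
      have hmt : m ≠ ⊤ := hma.ne_top
      refine ⟨fun α => if α = a then wgap m a else c' α, ?_, ?_⟩
      · intro α; dsimp only; split_ifs with h
        · exact wgap_nonneg hmt hma.le
        · exact hc'0 α
      · intro q hq
        rcases mem_insert.mp hq with rfl | hqs
        · have hfil : (insert q s).filter (fun α => α ≤ q) = insert q s :=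
            filter_eq_self.mpr (by
              intro x hx
              rcases mem_insert.mp hx with rfl | hx
              · exact le_refl x
              · exact (hs x hx).le)
          rw [hfil, sum_insert has, if_pos rfl]
          have hrest : (∑ α ∈ s, if α = q then wgap m q else c' α) = m := by
            rw [sum_congr rfl (fun x hx => if_neg (ne_of_lt (hs x hx)))]
            have hfil2 : s.filter (fun α => α ≤ m) = s :=
              filter_eq_self.mpr (fun x hx => le_max' s x hx)
            conv_lhs => rw [← hfil2]
            exact hc' m hms
          rw [hrest, add_comm]
          exact wgap_add hmt hma.le
        · have hfil : (insert a s).filter (fun α => α ≤ q) = s.filter (fun α => α ≤ q) := by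
            rw [filter_insert, if_neg (not_le.mpr (hs q hqs))]
          rw [hfil, sum_congr rfl
            (fun x hx => if_neg (ne_of_lt (hs x (mem_filter.mp hx).1)))]
          exact hc' q hqs
    · have hse' : s = ∅ := not_nonempty_iff_eq_empty.mp hse
      subst hse'
      refine ⟨fun α => if α = a then a else 0, ?_, ?_⟩
      · intro α; dsimp only; split_ifs with h
        · exact h ▸ hnn a (mem_insert_self a ∅)
        · exact le_refl _
      · intro q hq
        have hqa : q = a := by simpa using hq
        subst hqa
        simp

lemma pairSum_insert {n : ℕ} {M : Type*} [AddCommMonoid M] (F : Fin n → Fin n → M)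
    (hF : ∀ a b, F a b = F b a) {S : Finset (Fin n)} {a : Fin n} (ha : a ∉ S) :
    ∑ p ∈ ((insert a S) ×ˢ (insert a S)).filter (fun p => p.1 < p.2), F p.1 p.2
      = (∑ p ∈ (S ×ˢ S).filter (fun p => p.1 < p.2), F p.1 p.2) + ∑ u ∈ S, F a u := by
  classical
  rw [sum_filter, sum_filter, Finset.sum_product, Finset.sum_product, sum_insert ha]
  have h1 : ∑ y ∈ insert a S, (if a < y then F a y else 0)
      = ∑ y ∈ S, (if a < y then F a y else 0) := by
    rw [sum_insert ha, if_neg (lt_irrefl a), zero_add]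
  have h2 : ∀ x ∈ S, ∑ y ∈ insert a S, (if x < y then F x y else 0)
      = (if x < a then F x a else 0) + ∑ y ∈ S, (if x < y then F x y else 0) := by
    intro x hx
    rw [sum_insert ha]
  rw [h1, sum_congr rfl h2, sum_add_distrib]
  have h3 : (∑ y ∈ S, if a < y then F a y else 0) + (∑ x ∈ S, if x < a then F x a else 0)
      = ∑ u ∈ S, F a u := by
    rw [← sum_add_distrib]
    apply sum_congr rfl
    intro u hu
    have hua : u ≠ a := fun h => ha (h ▸ hu)
    rcases lt_or_gt_of_ne hua.symm with h | h
    · rw [if_pos h, if_neg (asymm h), add_zero]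
    · rw [if_neg (asymm h), if_pos h, zero_add, hF]
  dsimp only
  rw [← h3]
  abel

section KcSection
variable {n : ℕ} (Q : Fin n → Fin n → WithTop ℝ)

open scoped Classical in
noncomputable def Kc (α : WithTop ℝ) (v : Fin n) : Finset (Fin n) :=
  univ.filter (fun u => u = v ∨ α ≤ Q v u)

lemma mem_Kc {α : WithTop ℝ} {v u : Fin n} : u ∈ Kc Q α v ↔ (u = v ∨ α ≤ Q v u) := by
  classical
  simp [Kc]

lemma Kc_self (α : WithTop ℝ) (v : Fin n) : v ∈ Kc Q α v := (mem_Kc Q).mpr (Or.inl rfl)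

lemma min'_congr' {β : Type*} [LinearOrder β] {s t : Finset β} (h : s = t) (hs : s.Nonempty) :
    s.min' hs = t.min' (h ▸ hs) := by subst h; rfl

lemma exists_notmem {X Y K : Finset (Fin n)} (h : (X ∩ K).card < (Y ∩ K).card) :
    ∃ j, j ∈ Y ∧ j ∉ X ∧ j ∈ K := by
  by_contra hc
  push_neg at hc
  have hsub : Y ∩ K ⊆ X ∩ K := by
    intro u hu
    obtain ⟨h1, h2⟩ := mem_inter.mp hu
    refine mem_inter.mpr ⟨?_, h2⟩
    by_contra hx
    exact hc u h1 hx h2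
  exact absurd (card_le_card hsub) (not_le.mpr h)

variable (Qsymm : ∀ a b, Q a b = Q b a)
variable (Qanti : ∀ a b c : Fin n, a ≠ b → b ≠ c → a ≠ c → min (Q a c) (Q c b) ≤ Q a b)

include Qsymm Qanti
set_option linter.unusedSectionVars false

lemma Kc_eq {α : WithTop ℝ} {a b : Fin n} (hab : a ≠ b) (h : α ≤ Q a b) :
    Kc Q α a = Kc Q α b := by
  have key : ∀ x y u : Fin n, x ≠ y → α ≤ Q x y → (u = x ∨ α ≤ Q x u) → (u = y ∨ α ≤ Q y u) := by
    intro x y u hxy hxyq hu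
    by_cases huy : u = y
    · exact Or.inl huy
    right
    by_cases hux : u = x
    · subst hux; rw [Qsymm]; exact hxyq
    rcases hu with rfl | hq
    · exact absurd rfl hux
    · refine le_trans (le_min ?_ ?_) (Qanti y u x (fun h => huy h.symm) hux (fun h => hxy h.symm))
      · rw [Qsymm]; exact hxyq
      · exact hq
  ext u
  rw [mem_Kc, mem_Kc]
  constructor
  · exact key a b u hab h
  · exact key b a u hab.symm (by rw [Qsymm]; exact h)

lemma Kc_sub {α αp : WithTop ℝ} {v u : Fin n} (hαp : α ≤ αp) (hu : u ∈ Kc Q α v) :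
    Kc Q αp u ⊆ Kc Q α v := by
  intro w hw
  rw [mem_Kc] at hw hu ⊢
  by_cases hwv : w = v
  · exact Or.inl hwv
  right
  by_cases huv : u = v
  · subst huv
    rcases hw with rfl | hq
    · exact absurd rfl hwv
    · exact le_trans hαp hq
  have hQvu : α ≤ Q v u := by
    rcases hu with rfl | h
    · exact absurd rfl huv
    · exact h
  rcases hw with rfl | hq
  · exact hQvu
  by_cases hwu : w = u
  · subst hwu; exact hQvu
  exact le_trans (le_min hQvu (le_trans hαp hq))
    (Qanti v w u (fun h => hwv h.symm) hwu (fun h => huv h.symm))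

lemma lemE (X Y : Finset (Fin n)) (L : Finset (WithTop ℝ)) :
    ∀ (k : ℕ) (α : WithTop ℝ) (v : Fin n),
    (L.filter (fun α' => α < α')).card ≤ k →
    (X ∩ Kc Q α v).card < (Y ∩ Kc Q α v).card →
    ∃ j, j ∈ Y ∧ j ∉ X ∧ j ∈ Kc Q α v ∧
      ∀ α' ∈ L, α < α' → (X ∩ Kc Q α' j).card < (Y ∩ Kc Q α' j).card := by
  classical
  intro k
  induction k with
  | zero =>
    intro α v hk hcard
    obtain ⟨j, hjY, hjX, hjK⟩ := exists_notmem hcard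
    refine ⟨j, hjY, hjX, hjK, ?_⟩
    intro α' hα'L hαα'
    exfalso
    have hmem : α' ∈ L.filter (fun α' => α < α') := mem_filter.mpr ⟨hα'L, hαα'⟩
    have hpos := card_pos.mpr ⟨α', hmem⟩
    omega
  | succ k ih =>
    intro α v hk hcard
    by_cases hF : (L.filter (fun α' => α < α')).Nonempty
    · set αp := (L.filter (fun α' => α < α')).min' hF with hαpdef
      have hαpF : αp ∈ L.filter (fun α' => α < α') := min'_mem _ hF
      obtain ⟨hαpL, hααp⟩ := mem_filter.mp hαpF
      have hKne : ∀ u : Fin n, (Kc Q αp u).Nonempty := fun u => ⟨u, Kc_self Q αp u⟩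
      have hclass : ∀ u w : Fin n, w ∈ Kc Q αp u → Kc Q αp w = Kc Q αp u := by
        intro u w hw
        rcases (mem_Kc Q).mp hw with rfl | hq
        · rfl
        · by_cases hwu : w = u
          · subst hwu; rfl
          · exact (Kc_eq Q Qsymm Qanti (fun h => hwu h.symm) hq).symm
      have claim : ∃ u, u ∈ Y ∩ Kc Q α v ∧ (X ∩ Kc Q αp u).card < (Y ∩ Kc Q αp u).card := by
        by_contra hc
        push_neg at hc
        set rep : Fin n → Fin n := fun u => (Kc Q αp u).min' (hKne u) with hrepdef
        have hrepmem : ∀ u, rep u ∈ Kc Q αp u := fun u => min'_mem _ _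
        set R := (Y ∩ Kc Q α v).image rep with hRdef
        have hKrep : ∀ u, Kc Q αp (rep u) = Kc Q αp u := fun u => hclass u (rep u) (hrepmem u)
        have hRfix : ∀ r ∈ R, (Kc Q αp r).min' (hKne r) = r := by
          intro r hr
          obtain ⟨u', hu', rfl⟩ := mem_image.mp hr
          rw [min'_congr' (hKrep u')]
        have hsubB : ∀ r ∈ R, Kc Q αp r ⊆ Kc Q α v := by
          intro r hr
          obtain ⟨u', hu', rfl⟩ := mem_image.mp hr
          rw [hKrep u']
          exact Kc_sub Q Qsymm Qanti hααp.le (mem_inter.mp hu').2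
        have hdisj : ∀ r1 ∈ R, ∀ r2 ∈ R, r1 ≠ r2 → Disjoint (Kc Q αp r1) (Kc Q αp r2) := by
          intro r1 h1 r2 h2 hne
          rw [Finset.disjoint_left]
          intro w hw1 hw2
          apply hne
          have e1 : Kc Q αp w = Kc Q αp r1 := hclass r1 w hw1
          have e2 : Kc Q αp w = Kc Q αp r2 := hclass r2 w hw2
          rw [← hRfix r1 h1, ← hRfix r2 h2]
          exact min'_congr' (e1.symm.trans e2) _
        have hdisjY : ∀ r1 ∈ R, ∀ r2 ∈ R, r1 ≠ r2 →
            Disjoint (Y ∩ Kc Q αp r1) (Y ∩ Kc Q αp r2) :=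
          fun r1 h1 r2 h2 hne =>
            (hdisj r1 h1 r2 h2 hne).mono inter_subset_right inter_subset_right
        have hdisjX : ∀ r1 ∈ R, ∀ r2 ∈ R, r1 ≠ r2 →
            Disjoint (X ∩ Kc Q αp r1) (X ∩ Kc Q αp r2) :=
          fun r1 h1 r2 h2 hne =>
            (hdisj r1 h1 r2 h2 hne).mono inter_subset_right inter_subset_right
        have hYeq : Y ∩ Kc Q α v = R.biUnion (fun r => Y ∩ Kc Q αp r) := by
          apply Subset.antisymm
          · intro u' hu'
            refine mem_biUnion.mpr ⟨rep u', mem_image_of_mem rep hu',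
              mem_inter.mpr ⟨(mem_inter.mp hu').1, ?_⟩⟩
            rw [hKrep u']
            exact Kc_self Q αp u'
          · intro w hw
            obtain ⟨r, hr, hwm⟩ := mem_biUnion.mp hw
            exact mem_inter.mpr ⟨(mem_inter.mp hwm).1, hsubB r hr (mem_inter.mp hwm).2⟩
        have hYcard : (Y ∩ Kc Q α v).card = ∑ r ∈ R, (Y ∩ Kc Q αp r).card := by
          rw [hYeq, card_biUnion hdisjY]
        have hXsub : R.biUnion (fun r => X ∩ Kc Q αp r) ⊆ X ∩ Kc Q α v := by
          intro w hw
          obtain ⟨r, hr, hwm⟩ := mem_biUnion.mp hw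
          exact mem_inter.mpr ⟨(mem_inter.mp hwm).1, hsubB r hr (mem_inter.mp hwm).2⟩
        have hXcard : ∑ r ∈ R, (X ∩ Kc Q αp r).card ≤ (X ∩ Kc Q α v).card := by
          rw [← card_biUnion hdisjX]
          exact card_le_card hXsub
        have hper : ∀ r ∈ R, (Y ∩ Kc Q αp r).card ≤ (X ∩ Kc Q αp r).card := by
          intro r hr
          obtain ⟨u', hu', rfl⟩ := mem_image.mp hr
          rw [hKrep u']
          exact hc u' hu'
        have hfin : (Y ∩ Kc Q α v).card ≤ (X ∩ Kc Q α v).card := by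
          rw [hYcard]
          exact le_trans (sum_le_sum hper) hXcard
        omega
      obtain ⟨u, huYK, hcu⟩ := claim
      have hk' : (L.filter (fun α' => αp < α')).card ≤ k := by
        have hsub : L.filter (fun α' => αp < α') ⊆ L.filter (fun α' => α < α') := by
          intro x hx
          obtain ⟨h1, h2⟩ := mem_filter.mp hx
          exact mem_filter.mpr ⟨h1, lt_trans hααp h2⟩
        have hmemno : αp ∉ L.filter (fun α' => αp < α') :=
          fun h => lt_irrefl αp (mem_filter.mp h).2
        have hss := (Finset.ssubset_iff_of_subset hsub).mpr ⟨αp, hαpF, hmemno⟩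
        have := card_lt_card hss
        omega
      obtain ⟨j, hjY, hjX, hjK, hj⟩ := ih αp u hk' hcu
      refine ⟨j, hjY, hjX,
        Kc_sub Q Qsymm Qanti hααp.le (mem_inter.mp huYK).2 hjK, ?_⟩
      intro α' hα'L hαα'
      have hαple : αp ≤ α' := min'_le _ α' (mem_filter.mpr ⟨hα'L, hαα'⟩)
      rcases eq_or_lt_of_le hαple with rfl | hlt
      · rw [hclass u j hjK]
        exact hcu
      · exact hj α' hα'L hlt
    · obtain ⟨j, hjY, hjX, hjK⟩ := exists_notmem hcard
      refine ⟨j, hjY, hjX, hjK, ?_⟩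
      intro α' hα'L hαα'
      exact absurd ⟨α', mem_filter.mpr ⟨hα'L, hαα'⟩⟩ hF

omit Qsymm Qanti in
lemma filter_card_inter (S : Finset (Fin n)) (α : WithTop ℝ) (v : Fin n) (hv : v ∉ S) :
    S.filter (fun u => α ≤ Q v u) = S ∩ Kc Q α v := by
  classical
  ext u
  simp only [mem_filter, mem_inter, mem_Kc]
  constructor
  · rintro ⟨h1, h2⟩
    exact ⟨h1, Or.inr h2⟩
  · rintro ⟨h1, rfl | h2⟩
    · exact absurd h1 hv
    · exact ⟨h1, h2⟩

theorem mnat_quad (Qnn : ∀ a b : Fin n, a ≠ b → 0 ≤ Q a b) :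
    MnatConvex (quadF (fun _ => (0:ℝ)) Q) := by
  classical
  set L : Finset (WithTop ℝ) :=
    ((univ ×ˢ univ).filter (fun p : Fin n × Fin n => p.1 ≠ p.2)).image
      (fun p => Q p.1 p.2) with hLdef
  have hLmem : ∀ a b : Fin n, a ≠ b → Q a b ∈ L := fun a b hab =>
    mem_image.mpr ⟨(a, b), by simp [hab], rfl⟩
  have hLnn : ∀ x ∈ L, (0:WithTop ℝ) ≤ x := by
    intro x hx
    obtain ⟨p, hp, rfl⟩ := mem_image.mp hx
    exact Qnn _ _ (by simpa using (mem_filter.mp hp).2)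
  obtain ⟨c, hc0, hcsum⟩ := exists_coeff L hLnn
  have hdecomp : ∀ a b : Fin n, a ≠ b →
      Q a b = ∑ α ∈ L, (if α ≤ Q a b then c α else 0) := by
    intro a b hab
    rw [← sum_filter]
    exact (hcsum _ (hLmem a b hab)).symm
  have hquad : ∀ S : Finset (Fin n), quadF (fun _ => (0:ℝ)) Q S
      = ∑ p ∈ (S ×ˢ S).filter (fun p => p.1 < p.2), Q p.1 p.2 := by
    intro S
    simp [quadF]
  have hnbr : ∀ (v : Fin n) (S : Finset (Fin n)), v ∉ S →
      ∑ u ∈ S, Q v u = ∑ α ∈ L, (S ∩ Kc Q α v).card • c α := by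
    intro v S hv
    rw [sum_congr rfl (fun u hu => hdecomp v u (fun h => hv (by rw [h]; exact hu)))]
    rw [sum_comm]
    apply sum_congr rfl
    intro α hα
    rw [← sum_filter, sum_const, filter_card_inter Q S α v hv]
  intro X Y i hi
  obtain ⟨hiX, hiY⟩ := mem_sdiff.mp hi
  set A := X.erase i with hA
  have hiA : i ∉ A := notMem_erase i X
  have hXA : X = insert i A := (insert_erase hiX).symm
  have hXsplit : ∀ α, X ∩ Kc Q α i = insert i (A ∩ Kc Q α i) := fun α => by
    rw [hXA, insert_inter_of_mem (Kc_self Q α i)]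
  have hXcard : ∀ α, (X ∩ Kc Q α i).card = (A ∩ Kc Q α i).card + 1 := fun α => by
    rw [hXsplit α, card_insert_of_notMem (fun h => hiA (mem_inter.mp h).1)]
  by_cases hcase : ∀ α ∈ L, (Y ∩ Kc Q α i).card < (X ∩ Kc Q α i).card
  · left
    rw [hquad, hquad, hquad, hquad]
    conv_rhs => rw [hXA]
    rw [pairSum_insert Q Qsymm hiA, pairSum_insert Q Qsymm hiY]
    have key : ∑ u ∈ Y, Q i u ≤ ∑ u ∈ A, Q i u := by
      rw [hnbr i Y hiY, hnbr i A hiA]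
      apply sum_le_sum
      intro α hα
      apply nsmul_le_nsmul_left (hc0 α)
      have h2 := hcase α hα
      have h3 := hXcard α
      have h4 : (Y ∩ Kc Q α i).card = (Y ∩ Kc Q α i).card := rfl
      omega
    calc (∑ p ∈ (A ×ˢ A).filter (fun p => p.1 < p.2), Q p.1 p.2)
          + ((∑ p ∈ (Y ×ˢ Y).filter (fun p => p.1 < p.2), Q p.1 p.2) + ∑ u ∈ Y, Q i u)
        ≤ (∑ p ∈ (A ×ˢ A).filter (fun p => p.1 < p.2), Q p.1 p.2)
          + ((∑ p ∈ (Y ×ˢ Y).filter (fun p => p.1 < p.2), Q p.1 p.2) + ∑ u ∈ A, Q i u) := by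
          exact add_le_add_right (add_le_add_right key _) _
      _ = (∑ p ∈ (A ×ˢ A).filter (fun p => p.1 < p.2), Q p.1 p.2 + ∑ u ∈ A, Q i u)
          + ∑ p ∈ (Y ×ˢ Y).filter (fun p => p.1 < p.2), Q p.1 p.2 := by
          rw [← add_assoc, add_right_comm]
  · right
    push_neg at hcase
    set T := L.filter (fun α => (X ∩ Kc Q α i).card ≤ (Y ∩ Kc Q α i).card) with hTdef
    have hTne : T.Nonempty := by
      obtain ⟨α, hαL, hα⟩ := hcase
      exact ⟨α, mem_filter.mpr ⟨hαL, hα⟩⟩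
    set β := T.max' hTne with hβdef
    have hβT : β ∈ T := T.max'_mem hTne
    obtain ⟨hβL, hβle⟩ := mem_filter.mp hβT
    have hmax : ∀ α ∈ L, β < α → (Y ∩ Kc Q α i).card < (X ∩ Kc Q α i).card := by
      intro α hαL hβα
      by_contra hcon
      push_neg at hcon
      exact absurd (le_max' T α (mem_filter.mpr ⟨hαL, hcon⟩)) (not_le.mpr hβα)
    have hstart : (A ∩ Kc Q β i).card < (Y ∩ Kc Q β i).card := by
      have := hXcard β
      omega
    obtain ⟨j, hjY, hjA, hjK, hj⟩ :=
      lemE Q Qsymm Qanti A Y L (L.filter (fun α' => β < α')).card β i (le_refl _) hstart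
    have hji : j ≠ i := fun h => hiY (h ▸ hjY)
    have hjX : j ∉ X := by
      rw [hXA]
      simp only [mem_insert]
      rintro (h | h)
      · exact hji h
      · exact hjA h
    have hQij : β ≤ Q i j := by
      rcases (mem_Kc Q).mp hjK with h | h
      · exact absurd h hji
      · exact h
    refine ⟨j, mem_sdiff.mpr ⟨hjY, hjX⟩, ?_⟩
    set Y' := Y.erase j with hY'def
    have hjY' : j ∉ Y' := notMem_erase _ _
    have hiY' : i ∉ Y' := fun h => hiY (mem_of_mem_erase h)
    have hYj : Y = insert j Y' := (insert_erase hjY).symm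
    have hEI : (insert i Y).erase j = insert i Y' := by
      rw [hY'def, Finset.erase_insert_of_ne hji.symm]
    rw [hquad, hquad, hquad, hquad, hEI]
    conv_rhs => rw [hXA, hYj]
    rw [pairSum_insert Q Qsymm hjA, pairSum_insert Q Qsymm hiY',
      pairSum_insert Q Qsymm hiA, pairSum_insert Q Qsymm hjY']
    have key : (∑ u ∈ A, Q j u) + (∑ u ∈ Y', Q i u)
        ≤ (∑ u ∈ A, Q i u) + (∑ u ∈ Y', Q j u) := by
      rw [hnbr j A hjA, hnbr i Y' hiY', hnbr i A hiA, hnbr j Y' hjY',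
        ← sum_add_distrib, ← sum_add_distrib]
      apply sum_le_sum
      intro α hα
      rw [← add_nsmul, ← add_nsmul]
      apply nsmul_le_nsmul_left (hc0 α)
      rcases le_or_gt α β with hle | hlt
      · have hKeq : Kc Q α i = Kc Q α j :=
          Kc_eq Q Qsymm Qanti hji.symm (le_trans hle hQij)
        rw [hKeq]
      · have hnoij : ¬ α ≤ Q i j := by
          intro hcon
          have hKeq : Kc Q α i = Kc Q α j := Kc_eq Q Qsymm Qanti hji.symm hcon
          have h1 := hj α hα hlt
          have h2 := hmax α hα hlt
          have h3 := hXcard α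
          rw [← hKeq] at h1
          omega
        have hjKi : j ∉ Kc Q α i := by
          intro h
          rcases (mem_Kc Q).mp h with h' | h'
          · exact hji h'
          · exact hnoij h'
        have e1 : Y' ∩ Kc Q α i = Y ∩ Kc Q α i := by
          apply Subset.antisymm
          · exact inter_subset_inter (erase_subset _ _) Subset.rfl
          · intro u hu
            obtain ⟨h1, h2⟩ := mem_inter.mp hu
            refine mem_inter.mpr ⟨mem_erase.mpr ⟨?_, h1⟩, h2⟩
            intro h
            subst h
            exact hjKi h2
        have e2 : Y ∩ Kc Q α j = insert j (Y' ∩ Kc Q α j) := by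
          conv_lhs => rw [hYj]
          rw [insert_inter_of_mem (Kc_self Q α j)]
        have h1 := hj α hα hlt
        have h2 := hmax α hα hlt
        have h3 := hXcard α
        have c2 : (Y ∩ Kc Q α j).card = (Y' ∩ Kc Q α j).card + 1 := by
          rw [e2, card_insert_of_notMem (fun h => hjY' (mem_inter.mp h).1)]
        have c3 : (Y' ∩ Kc Q α i).card = (Y ∩ Kc Q α i).card := by rw [e1]
        omega
    calc (∑ p ∈ (A ×ˢ A).filter (fun p => p.1 < p.2), Q p.1 p.2 + ∑ u ∈ A, Q j u)
          + (∑ p ∈ (Y' ×ˢ Y').filter (fun p => p.1 < p.2), Q p.1 p.2 + ∑ u ∈ Y', Q i u)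
        = (∑ p ∈ (A ×ˢ A).filter (fun p => p.1 < p.2), Q p.1 p.2
            + ∑ p ∈ (Y' ×ˢ Y').filter (fun p => p.1 < p.2), Q p.1 p.2)
          + ((∑ u ∈ A, Q j u) + (∑ u ∈ Y', Q i u)) := by
          rw [add_add_add_comm]
      _ ≤ (∑ p ∈ (A ×ˢ A).filter (fun p => p.1 < p.2), Q p.1 p.2
            + ∑ p ∈ (Y' ×ˢ Y').filter (fun p => p.1 < p.2), Q p.1 p.2)
          + ((∑ u ∈ A, Q i u) + (∑ u ∈ Y', Q j u)) := add_le_add_right key _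
      _ = (∑ p ∈ (A ×ˢ A).filter (fun p => p.1 < p.2), Q p.1 p.2 + ∑ u ∈ A, Q i u)
          + (∑ p ∈ (Y' ×ˢ Y').filter (fun p => p.1 < p.2), Q p.1 p.2 + ∑ u ∈ Y', Q j u) := by
          rw [add_add_add_comm]

end KcSection

section Build
variable {n : ℕ} (H : Fin n → Fin n → Option (WithTop ℝ))

open scoped Classical in
noncomputable def valsH : Finset (WithTop ℝ) :=
  ((univ ×ˢ univ).filter (fun p : Fin n × Fin n => p.1 ≠ p.2 ∧ (H p.1 p.2).isSome)).image
    (fun p => (H p.1 p.2).getD 0)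

lemma mem_valsH {β : WithTop ℝ} : β ∈ valsH H ↔ DefVal H β := by
  classical
  constructor
  · intro h
    obtain ⟨p, hp, hv⟩ := mem_image.mp h
    obtain ⟨hne, hsome⟩ := (mem_filter.mp hp).2
    obtain ⟨c, hc⟩ := Option.isSome_iff_exists.mp hsome
    refine ⟨p.1, p.2, hne, ?_⟩
    rw [hc] at hv ⊢
    simp at hv
    rw [hv]
  · rintro ⟨i, j, hne, hij⟩
    refine mem_image.mpr ⟨(i, j), mem_filter.mpr ⟨by simp, hne, by simp [hij]⟩, by simp [hij]⟩

open scoped Classical in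
noncomputable def TH (i j : Fin n) : Finset (WithTop ℝ) :=
  (valsH H).filter (fun β => AdjS H β i j)

lemma mem_TH {β : WithTop ℝ} {i j : Fin n} :
    β ∈ TH H i j ↔ β ∈ valsH H ∧ AdjS H β i j := by
  classical
  simp [TH]

open scoped Classical in
noncomputable def Hc (i j : Fin n) : WithTop ℝ :=
  match H i j with
  | some c => c
  | none =>
    if hT : (TH H i j).Nonempty then (TH H i j).max' hT
    else if hv : (valsH H).Nonempty then (valsH H).min' hv else 0

lemma Hc_def {i j : Fin n} {c : WithTop ℝ} (h : H i j = some c) : Hc H i j = c := by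
  unfold Hc
  rw [h]

lemma Hc_none_T {i j : Fin n} (h : H i j = none) (hT : (TH H i j).Nonempty) :
    Hc H i j = (TH H i j).max' hT := by
  unfold Hc
  rw [h]
  simp only [dif_pos hT]

lemma Hc_none_noT {i j : Fin n} (h : H i j = none) (hT : ¬ (TH H i j).Nonempty)
    (hv : (valsH H).Nonempty) : Hc H i j = (valsH H).min' hv := by
  unfold Hc
  rw [h]
  simp only [dif_neg hT, dif_pos hv]

lemma Hc_none_noT_nov {i j : Fin n} (h : H i j = none) (hT : ¬ (TH H i j).Nonempty)
    (hv : ¬ (valsH H).Nonempty) : Hc H i j = 0 := by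
  unfold Hc
  rw [h]
  simp only [dif_neg hT, dif_neg hv]

variable (Hsymm : ∀ i j : Fin n, H i j = H j i)

lemma AdjE_mono {α α' : WithTop ℝ} {i j : Fin n} (h : α' ≤ α) (he : AdjE H α i j) :
    AdjE H α' i j := by
  obtain ⟨hne, c, hc, hα⟩ := he
  exact ⟨hne, c, hc, le_trans h hα⟩

lemma InV_mono {α α' : WithTop ℝ} {i : Fin n} (h : α' ≤ α) (hv : InV H α i) :
    InV H α' i := by
  obtain ⟨j, hj⟩ := hv
  exact ⟨j, AdjE_mono H h hj⟩

lemma AdjS_mono {α α' : WithTop ℝ} {i j : Fin n} (h : α' ≤ α) (hs : AdjS H α i j) :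
    AdjS H α' i j := by
  obtain ⟨hne, hnone, h1, h2, hp⟩ := hs
  exact ⟨hne, hnone, InV_mono H h h1, InV_mono H h h2,
    Relation.ReflTransGen.mono (fun x y hxy => AdjE_mono H h hxy) _ _ hp⟩

lemma AdjT_mono {α α' : WithTop ℝ} {i j : Fin n} (h : α' ≤ α) (ht : AdjT H α i j) :
    AdjT H α' i j := by
  rcases ht with h1 | h1
  · exact Or.inl (AdjE_mono H h h1)
  · exact Or.inr (AdjS_mono H h h1)

include Hsymm

lemma AdjE_symm {α : WithTop ℝ} {i j : Fin n} (he : AdjE H α i j) : AdjE H α j i := by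
  obtain ⟨hne, c, hc, hα⟩ := he
  exact ⟨hne.symm, c, by rw [← Hsymm]; exact hc, hα⟩

lemma pathmin {α : WithTop ℝ} {i j : Fin n}
    (hpath : Relation.ReflTransGen (AdjE H α) i j) :
    i ≠ j → ∃ β, α ≤ β ∧ β ∈ valsH H ∧ InV H β i ∧ InV H β j ∧
      Relation.ReflTransGen (AdjE H β) i j := by
  induction hpath with
  | refl => exact fun h => absurd rfl h
  | @tail b k hpath' hedge ih =>
    intro hij
    obtain ⟨hbk, cval, hHbk, hαc⟩ := hedge
    by_cases hib : i = b
    · subst hib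
      have eb : AdjE H cval i k := ⟨hbk, cval, hHbk, le_refl _⟩
      exact ⟨cval, hαc, (mem_valsH H).mpr ⟨i, k, hbk, hHbk⟩, ⟨k, eb⟩,
        ⟨i, AdjE_symm H Hsymm eb⟩, Relation.ReflTransGen.single eb⟩
    · obtain ⟨β', hαβ', hβ'v, hI1, hI2, hpathβ'⟩ := ih hib
      have h1 : min β' cval ≤ β' := min_le_left _ _
      have h2 : min β' cval ≤ cval := min_le_right _ _
      have eγ : AdjE H (min β' cval) b k := ⟨hbk, cval, hHbk, h2⟩
      refine ⟨min β' cval, le_min hαβ' hαc, ?_, InV_mono H h1 hI1,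
        ⟨b, AdjE_symm H Hsymm eγ⟩, Relation.ReflTransGen.tail
          (Relation.ReflTransGen.mono (fun x y hxy => AdjE_mono H h1 hxy) _ _ hpathβ') eγ⟩
      rcases min_cases β' cval with ⟨he, _⟩ | ⟨he, _⟩
      · rw [he]; exact hβ'v
      · rw [he]; exact (mem_valsH H).mpr ⟨b, k, hbk, hHbk⟩

lemma AdjS_symm {α : WithTop ℝ} {i j : Fin n} (hs : AdjS H α i j) : AdjS H α j i := by
  obtain ⟨hne, hnone, h1, h2, hp⟩ := hs
  refine ⟨hne.symm, by rw [← Hsymm]; exact hnone, h2, h1, ?_⟩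
  have hsym : Symmetric (AdjE H α) := fun x y h => AdjE_symm H Hsymm h
  haveI : Std.Symm (AdjE H α) := ⟨fun a b h => hsym h⟩
  exact Std.Symm.symm _ _ hp

lemma val_le_Hc {α : WithTop ℝ} {i j : Fin n} (hij : i ≠ j) (h : AdjT H α i j) :
    α ≤ Hc H i j := by
  rcases h with hE | hS
  · obtain ⟨hne, c, hc, hαc⟩ := hE
    rw [Hc_def H hc]
    exact hαc
  · obtain ⟨hne, hnone, hIi, hIj, hpath⟩ := hS
    obtain ⟨β, hαβ, hβv, hIβi, hIβj, hpathβ⟩ := pathmin H Hsymm hpath hne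
    have hβT : β ∈ TH H i j := (mem_TH H).mpr ⟨hβv, hne, hnone, hIβi, hIβj, hpathβ⟩
    have hT : (TH H i j).Nonempty := ⟨β, hβT⟩
    rw [Hc_none_T H hnone hT]
    exact le_trans hαβ (le_max' _ β hβT)

lemma Hc_symm (i j : Fin n) : Hc H i j = Hc H j i := by
  by_cases hij : i = j
  · subst hij; rfl
  cases hH : H i j with
  | some c =>
    have hH2 : H j i = some c := by rw [← Hsymm]; exact hH
    rw [Hc_def H hH, Hc_def H hH2]
  | none =>
    have hH2 : H j i = none := by rw [← Hsymm]; exact hH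
    have hTs : TH H i j = TH H j i := by
      ext β
      rw [mem_TH, mem_TH]
      constructor
      · rintro ⟨h1, h2⟩; exact ⟨h1, AdjS_symm H Hsymm h2⟩
      · rintro ⟨h1, h2⟩; exact ⟨h1, AdjS_symm H Hsymm h2⟩
    unfold Hc
    rw [hH, hH2]
    simp only [hTs]

omit Hsymm in
lemma valsH_nonneg (Hnn : ∀ (i j : Fin n) (a : WithTop ℝ), i ≠ j → H i j = some a → 0 ≤ a) :
    ∀ x ∈ valsH H, (0:WithTop ℝ) ≤ x := by
  intro x hx
  obtain ⟨i, j, hne, hij⟩ := (mem_valsH H).mp hx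
  exact Hnn i j x hne hij

omit Hsymm in
lemma Hc_nonneg (Hnn : ∀ (i j : Fin n) (a : WithTop ℝ), i ≠ j → H i j = some a → 0 ≤ a)
    {i j : Fin n} (hij : i ≠ j) : 0 ≤ Hc H i j := by
  cases hH : H i j with
  | some c => rw [Hc_def H hH]; exact Hnn i j c hij hH
  | none =>
    by_cases hT : (TH H i j).Nonempty
    · rw [Hc_none_T H hH hT]
      exact valsH_nonneg H Hnn _ ((mem_TH H).mp ((TH H i j).max'_mem hT)).1
    · by_cases hv : (valsH H).Nonempty
      · rw [Hc_none_noT H hH hT hv]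
        exact valsH_nonneg H Hnn _ (min'_mem _ hv)
      · rw [Hc_none_noT_nov H hH hT hv]

omit Hsymm in
lemma Hc_cases {i j : Fin n} (hij : i ≠ j) :
    AdjT H (Hc H i j) i j ∨ (H i j = none ∧ ¬ (TH H i j).Nonempty) := by
  cases hH : H i j with
  | some c =>
    left
    rw [Hc_def H hH]
    exact Or.inl ⟨hij, c, hH, le_refl c⟩
  | none =>
    by_cases hT : (TH H i j).Nonempty
    · left
      rw [Hc_none_T H hH hT]
      exact Or.inr ((mem_TH H).mp ((TH H i j).max'_mem hT)).2
    · exact Or.inr ⟨rfl, hT⟩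

omit Hsymm in
lemma Hc_ge_min (hv : (valsH H).Nonempty) {i j : Fin n} (hij : i ≠ j) :
    (valsH H).min' hv ≤ Hc H i j := by
  cases hH : H i j with
  | some c =>
    rw [Hc_def H hH]
    exact min'_le _ _ ((mem_valsH H).mpr ⟨i, j, hij, hH⟩)
  | none =>
    by_cases hT : (TH H i j).Nonempty
    · rw [Hc_none_T H hH hT]
      exact min'_le _ _ ((mem_TH H).mp ((TH H i j).max'_mem hT)).1
    · rw [Hc_none_noT H hH hT hv]

lemma Hc_anti (Hnn : ∀ (i j : Fin n) (a : WithTop ℝ), i ≠ j → H i j = some a → 0 ≤ a)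
    (hcomplete : ∀ α : WithTop ℝ, 0 ≤ α →
      ∀ i j : Fin n, Relation.ReflTransGen (AdjT H α) i j → i ≠ j → AdjT H α i j)
    (a b k : Fin n) (hab : a ≠ b) (hbk : b ≠ k) (hak : a ≠ k) :
    min (Hc H a k) (Hc H k b) ≤ Hc H a b := by
  set m := min (Hc H a k) (Hc H k b) with hm
  have hm0 : 0 ≤ m := le_min (Hc_nonneg H Hnn hak) (Hc_nonneg H Hnn hbk.symm)
  by_cases hv : (valsH H).Nonempty
  · by_cases hmv : m ≤ (valsH H).min' hv
    · exact le_trans hmv (Hc_ge_min H hv hab)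
    · have h1 : AdjT H m a k := by
        rcases Hc_cases H hak with hA | ⟨hnone, hT⟩
        · exact AdjT_mono H (min_le_left _ _) hA
        · exfalso
          apply hmv
          rw [← Hc_none_noT H hnone hT hv]
          exact min_le_left _ _
      have h2 : AdjT H m k b := by
        rcases Hc_cases H hbk.symm with hA | ⟨hnone, hT⟩
        · exact AdjT_mono H (min_le_right _ _) hA
        · exfalso
          apply hmv
          rw [← Hc_none_noT H hnone hT hv]
          exact min_le_right _ _
      have hchain : Relation.ReflTransGen (AdjT H m) a b :=
        Relation.ReflTransGen.tail (Relation.ReflTransGen.single h1) h2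
      exact val_le_Hc H Hsymm hab (hcomplete m hm0 a b hchain hab)
  · have hz : ∀ x y : Fin n, x ≠ y → Hc H x y = 0 := by
      intro x y hxy
      cases hH : H x y with
      | some c => exact absurd ⟨c, (mem_valsH H).mpr ⟨x, y, hxy, hH⟩⟩ hv
      | none =>
        have hT : ¬ (TH H x y).Nonempty := fun ⟨β, hβ⟩ => hv ⟨β, ((mem_TH H).mp hβ).1⟩
        exact Hc_none_noT_nov H hH hT hv
    rw [hm, hz a b hab, hz a k hak, hz k b hbk.symm]
    simp

end Build

/-- Let `H` be a symmetric partial matrix whose defined entries lie in `ℝ₊ ∪ {+∞}` and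
satisfy the anti-ultrametric inequality whenever all three entries of a triple are defined.
If for every `α ∈ ℝ₊ ∪ {+∞}` each connected component of `G̃_H^α = (V_H^α, E_H^α ∪ S_H^α)`
is complete, then `H` is M♮-convex completable; moreover one such completion `H'` assigns to
each undefined entry `h_{ij}` the largest value `α` among the defined entry values with
`{i,j} ∈ S_H^α`, and the smallest defined entry value to all remaining undefined entries. -/
theorem stmt7 (n : ℕ) (H : Fin n → Fin n → Option (WithTop ℝ))
    (Hsymm : ∀ i j : Fin n, H i j = H j i)
    (Hnn : ∀ (i j : Fin n) (a : WithTop ℝ), i ≠ j → H i j = some a → 0 ≤ a)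
    (Hanti : ∀ (i j k : Fin n) (a b c : WithTop ℝ), i ≠ j → j ≠ k → i ≠ k →
      H i j = some a → H j k = some b → H i k = some c → min b c ≤ a)
    (hcomplete : ∀ α : WithTop ℝ, 0 ≤ α →
      ∀ i j : Fin n, Relation.ReflTransGen (AdjT H α) i j → i ≠ j → AdjT H α i j) :
    ∃ H' : Fin n → Fin n → WithTop ℝ,
      (∀ i j : Fin n, H' i j = H' j i) ∧
      (∀ (i j : Fin n) (a : WithTop ℝ), i ≠ j → H i j = some a → H' i j = a) ∧
      (∃ h : Fin n → ℝ, MnatConvex (quadF h H')) ∧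
      (∀ i j : Fin n, i ≠ j → H i j = none →
        ((∃ β : WithTop ℝ, DefVal H β ∧ AdjS H β i j) →
          DefVal H (H' i j) ∧ AdjS H (H' i j) i j ∧
            ∀ β : WithTop ℝ, DefVal H β → AdjS H β i j → β ≤ H' i j) ∧
        ((¬ ∃ β : WithTop ℝ, DefVal H β ∧ AdjS H β i j) →
          (∀ β : WithTop ℝ, DefVal H β → H' i j ≤ β) ∧
          ((∃ β : WithTop ℝ, DefVal H β) → DefVal H (H' i j)))) := by

  classical
  refine ⟨Hc H, Hc_symm H Hsymm, ?_, ⟨fun _ => 0, ?_⟩, ?_⟩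
  · intro i j a hij h
    exact Hc_def H h
  · exact mnat_quad (Hc H) (Hc_symm H Hsymm)
      (fun a b c hab hbc hac => Hc_anti H Hsymm Hnn hcomplete a b c hab hbc hac)
      (fun a b hab => Hc_nonneg H Hnn hab)
  · intro i j hij hnone
    constructor
    · rintro ⟨β, hdv, hadj⟩
      have hT : (TH H i j).Nonempty := ⟨β, (mem_TH H).mpr ⟨(mem_valsH H).mpr hdv, hadj⟩⟩
      have hHc := Hc_none_T H hnone hT
      refine ⟨?_, ?_, ?_⟩
      · rw [hHc]
        exact (mem_valsH H).mp ((mem_TH H).mp ((TH H i j).max'_mem hT)).1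
      · rw [hHc]
        exact ((mem_TH H).mp ((TH H i j).max'_mem hT)).2
      · intro γ hγdv hγadj
        rw [hHc]
        exact le_max' _ γ ((mem_TH H).mpr ⟨(mem_valsH H).mpr hγdv, hγadj⟩)
    · intro hnex
      have hT : ¬ (TH H i j).Nonempty := by
        rintro ⟨β, hβ⟩
        obtain ⟨h1, h2⟩ := (mem_TH H).mp hβ
        exact hnex ⟨β, (mem_valsH H).mp h1, h2⟩
      constructor
      · intro γ hγ
        have hγv : γ ∈ valsH H := (mem_valsH H).mpr hγ
        have hv : (valsH H).Nonempty := ⟨γ, hγv⟩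
        rw [Hc_none_noT H hnone hT hv]
        exact min'_le _ _ hγv
      · rintro ⟨γ, hγ⟩
        have hv : (valsH H).Nonempty := ⟨γ, (mem_valsH H).mpr hγ⟩
        rw [Hc_none_noT H hnone hT hv]
        exact (mem_valsH H).mp (min'_mem _ hv)
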